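/- Let U ⊆ ℝ^d be an open set and let α : U → (ℝ^d)* be a continuous 1-form on U (a continuous map into the continuous linear functionals on ℝ^d). Suppose that for every C^∞ vector field X : ℝ^d → ℝ^d with compact support contained in U and everywhere vanishing divergence (div X(x) = trace(DX(x)) = 0 for all x), one has ∫_U α(x)(X(x)) dx = 0 with respect to Lebesgue measure. Then α is exact in the sense that for every closed continuously differentiable curve γ : [0,1] → U with γ(0) = γ(1), the line integral vanishes: ∫₀¹ α(γ(t))(γ′(t)) dt = 0. -/

import Mathlib

open MeasureTheory

set_option synthInstance.maxHeartbeats 1000000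
set_option maxHeartbeats 1000000
open MeasureTheory Metric intervalIntegral

lemma stmt15_hasFDerivAt {d : ℕ} {E G : Type}
    [NormedAddCommGroup E] [NormedSpace ℝ E] [CompleteSpace E]
    [NormedAddCommGroup G] [NormedSpace ℝ G] [CompleteSpace G]
    (B : E →L[ℝ] (Fin d → ℝ) →L[ℝ] G)
    (g : (Fin d → ℝ) → E) (hg : ContDiff ℝ (⊤:ℕ∞) g) (hgs : HasCompactSupport g)
    (γ c : ℝ → (Fin d → ℝ)) (hγ : Continuous γ) (hc : Continuous c) (x₀ : Fin d → ℝ) :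
    HasFDerivAt (fun x => ∫ t in (0:ℝ)..1, B (g (x - γ t)) (c t))
      (∫ t in (0:ℝ)..1,
        (((ContinuousLinearMap.compL ℝ (Fin d → ℝ) E G).comp B.flip).flip)
          (fderiv ℝ g (x₀ - γ t)) (c t)) x₀ := by
  set B' := ((ContinuousLinearMap.compL ℝ (Fin d → ℝ) E G).comp B.flip).flip with hB'
  have hgd : ContDiff ℝ (⊤:ℕ∞) (fderiv ℝ g) :=
    hg.fderiv_right (m := (⊤:ℕ∞)) (by exact_mod_cast le_top)
  have hg1 : Continuous (fderiv ℝ g) := hgd.continuous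
  obtain ⟨M, hM⟩ := (hgs.fderiv (𝕜 := ℝ)).exists_bound_of_continuous hg1
  have key : ∀ (t : ℝ) (x : Fin d → ℝ),
      HasFDerivAt (fun x => B (g (x - γ t)) (c t)) (B' (fderiv ℝ g (x - γ t)) (c t)) x := by
    intro t x
    have h1 : HasFDerivAt (fun x : Fin d → ℝ => x - γ t) (ContinuousLinearMap.id ℝ _) x :=
      (hasFDerivAt_id x).sub_const (γ t)
    have h2 : HasFDerivAt g (fderiv ℝ g (x - γ t)) (x - γ t) :=
      (hg.differentiable (by simp) (x - γ t)).hasFDerivAt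
    have h3 := ((B.flip (c t)).hasFDerivAt.comp x ((h2.comp x h1)))
    convert h3 using 1
    · rfl
    · rfl
    · ext v; simp [hB']
  have cont_integrand : ∀ x : Fin d → ℝ, Continuous fun t => B (g (x - γ t)) (c t) :=
    fun x => (B.continuous₂.comp ((hg.continuous.comp (continuous_const.sub hγ)).prodMk hc))
  have cont_deriv : Continuous fun t => B' (fderiv ℝ g (x₀ - γ t)) (c t) :=
    (B'.continuous₂.comp ((hg1.comp (continuous_const.sub hγ)).prodMk hc))
  obtain ⟨C, hC⟩ := (isCompact_Icc (a := (0:ℝ)) (b := 1)).exists_bound_of_continuousOn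
      hc.continuousOn
  have hC0 : 0 ≤ C := (norm_nonneg (c 0)).trans (hC 0 ⟨le_refl 0, zero_le_one⟩)
  have hM0 : 0 ≤ M := (norm_nonneg _).trans (hM 0)
  have h := intervalIntegral.hasFDerivAt_integral_of_dominated_of_fderiv_le
      (𝕜 := ℝ) (μ := volume) (a := 0) (b := 1)
      (F := fun x t => B (g (x - γ t)) (c t))
      (F' := fun x t => B' (fderiv ℝ g (x - γ t)) (c t)) (x₀ := x₀)
      (bound := fun _ => ‖B'‖ * M * C) (s := ball x₀ 1) (ball_mem_nhds x₀ one_pos)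
      (Filter.Eventually.of_forall fun x => (cont_integrand x).aestronglyMeasurable)
      ((cont_integrand x₀).intervalIntegrable 0 1)
      cont_deriv.aestronglyMeasurable
      ?_ (intervalIntegrable_const) ?_
  · exact h
  · refine Filter.Eventually.of_forall fun t ht x _ => ?_
    have hct : ‖c t‖ ≤ C := hC t (Set.uIcc_of_le (zero_le_one (α := ℝ)) ▸ Set.uIoc_subset_uIcc ht)
    calc ‖B' (fderiv ℝ g (x - γ t)) (c t)‖
        ≤ ‖B' (fderiv ℝ g (x - γ t))‖ * ‖c t‖ := ContinuousLinearMap.le_opNorm _ _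
      _ ≤ (‖B'‖ * ‖fderiv ℝ g (x - γ t)‖) * ‖c t‖ := by
          gcongr; exact ContinuousLinearMap.le_opNorm _ _
      _ ≤ (‖B'‖ * M) * C := by gcongr <;> first | exact hM _ | exact hct
  · exact Filter.Eventually.of_forall fun t _ x _ => key t x

lemma stmt15_contDiff {d : ℕ} (γ c : ℝ → (Fin d → ℝ)) (hγ : Continuous γ)
    (hc : Continuous c) (n : ℕ) :
    ∀ {E G : Type}
    [NormedAddCommGroup E] [NormedSpace ℝ E] [CompleteSpace E]
    [NormedAddCommGroup G] [NormedSpace ℝ G] [CompleteSpace G]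
    (B : E →L[ℝ] (Fin d → ℝ) →L[ℝ] G)
    (g : (Fin d → ℝ) → E), ContDiff ℝ (⊤:ℕ∞) g → HasCompactSupport g →
    ContDiff ℝ (n : WithTop ℕ∞) (fun x => ∫ t in (0:ℝ)..1, B (g (x - γ t)) (c t)) := by
  induction n with
  | zero =>
    intro E G _ _ _ _ _ _ B g hg hgs
    simp only [Nat.cast_zero]
    rw [contDiff_zero]
    obtain ⟨M, hM⟩ := hgs.exists_bound_of_continuous hg.continuous
    obtain ⟨C, hC⟩ := (isCompact_Icc (a := (0:ℝ)) (b := 1)).exists_bound_of_continuousOn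
      hc.continuousOn
    have hM0 : 0 ≤ M := (norm_nonneg _).trans (hM 0)
    have cont_integrand : ∀ x : Fin d → ℝ, Continuous fun t => B (g (x - γ t)) (c t) :=
      fun x => (B.continuous₂.comp ((hg.continuous.comp (continuous_const.sub hγ)).prodMk hc))
    refine intervalIntegral.continuous_of_dominated_interval
      (bound := fun _ => ‖B‖ * M * C)
      (fun x => (cont_integrand x).aestronglyMeasurable) ?_ intervalIntegrable_const ?_
    · intro x
      refine Filter.Eventually.of_forall fun t ht => ?_
      have hct : ‖c t‖ ≤ C := hC t (Set.uIcc_of_le (zero_le_one (α := ℝ)) ▸ Set.uIoc_subset_uIcc ht)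
      calc ‖B (g (x - γ t)) (c t)‖
          ≤ ‖B (g (x - γ t))‖ * ‖c t‖ := ContinuousLinearMap.le_opNorm _ _
        _ ≤ (‖B‖ * ‖g (x - γ t)‖) * ‖c t‖ := by
            gcongr; exact ContinuousLinearMap.le_opNorm _ _
        _ ≤ (‖B‖ * M) * C := by
            gcongr <;> first
              | exact hM _ | exact hct | exact mul_nonneg (norm_nonneg _) hM0
    · refine Filter.Eventually.of_forall fun t _ => ?_
      exact B.continuous₂.comp ((hg.continuous.comp (continuous_id.sub continuous_const)).prodMk
        continuous_const)
  | succ n IH =>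
    intro E G _ _ _ _ _ _ B g hg hgs
    set B' := ((ContinuousLinearMap.compL ℝ (Fin d → ℝ) E G).comp B.flip).flip with hB'
    have hgd : ContDiff ℝ (⊤:ℕ∞) (fderiv ℝ g) :=
      hg.fderiv_right (m := (⊤:ℕ∞)) (by exact_mod_cast le_top)
    have hderiv : ∀ x₀, HasFDerivAt (fun x => ∫ t in (0:ℝ)..1, B (g (x - γ t)) (c t))
        (∫ t in (0:ℝ)..1, B' (fderiv ℝ g (x₀ - γ t)) (c t)) x₀ :=
      fun x₀ => stmt15_hasFDerivAt B g hg hgs γ c hγ hc x₀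
    have hfd : fderiv ℝ (fun x => ∫ t in (0:ℝ)..1, B (g (x - γ t)) (c t))
        = fun x₀ => ∫ t in (0:ℝ)..1, B' (fderiv ℝ g (x₀ - γ t)) (c t) :=
      funext fun x₀ => (hderiv x₀).fderiv
    rw [show (((n+1:ℕ)) : WithTop ℕ∞) = ((n:WithTop ℕ∞)+1) by push_cast; ring]
    refine contDiff_succ_iff_fderiv.2 ⟨fun x => (hderiv x).differentiableAt, by simp, ?_⟩
    rw [hfd]
    exact IH B' (fderiv ℝ g) hgd (hgs.fderiv (𝕜 := ℝ))

lemma stmt15_trace {d : ℕ} (ℓ : (Fin d → ℝ) →L[ℝ] ℝ) (w : Fin d → ℝ) :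
    LinearMap.trace ℝ (Fin d → ℝ)
      ((ℓ.smulRight w : (Fin d → ℝ) →L[ℝ] (Fin d → ℝ)) : (Fin d → ℝ) →ₗ[ℝ] (Fin d → ℝ)) = ℓ w := by
  rw [LinearMap.trace_eq_matrix_trace ℝ (Pi.basisFun ℝ (Fin d))]
  have h2 : ℓ w = ∑ i, w i * ℓ (Pi.basisFun ℝ (Fin d) i) := by
    conv_lhs => rw [← (Pi.basisFun ℝ (Fin d)).sum_repr w]
    simp [mul_comm]
  rw [h2, Matrix.trace]
  congr 1
  ext i
  simp [Matrix.diag, LinearMap.toMatrix_apply, mul_comm]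


/-- A continuous 1-form `α` on an open set `U ⊆ ℝ^d` which integrates to zero
against every compactly supported divergence-free `C^∞` vector field supported
in `U` is exact: its line integral over every closed `C¹` curve in `U` vanishes. -/
theorem stmt_15 {d : ℕ} (U : Set (Fin d → ℝ)) (hU : IsOpen U)
    (α : (Fin d → ℝ) → ((Fin d → ℝ) →L[ℝ] ℝ)) (hα : ContinuousOn α U)
    (hint : ∀ X : (Fin d → ℝ) → Fin d → ℝ,
      ContDiff ℝ (⊤ : ℕ∞) X → HasCompactSupport X → tsupport X ⊆ U →
      (∀ x, LinearMap.trace ℝ (Fin d → ℝ)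
        ((fderiv ℝ X x : (Fin d → ℝ) →L[ℝ] (Fin d → ℝ)) :
          (Fin d → ℝ) →ₗ[ℝ] (Fin d → ℝ)) = 0) →
      ∫ x in U, α x (X x) = 0) :
    ∀ (γ γ' : ℝ → Fin d → ℝ),
      (∀ t ∈ Set.Icc (0:ℝ) 1, HasDerivAt γ (γ' t) t) →
      ContinuousOn γ' (Set.Icc (0:ℝ) 1) →
      (∀ t ∈ Set.Icc (0:ℝ) 1, γ t ∈ U) →
      γ 0 = γ 1 →
      ∫ t in (0:ℝ)..1, α (γ t) (γ' t) = 0 := by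
  intro γ γ' hdiff hγ'c hmem hclosed
  have h01 : (0:ℝ) ≤ 1 := zero_le_one
  have hIcc : Set.uIcc (0:ℝ) 1 = Set.Icc 0 1 := Set.uIcc_of_le h01
  have hγc : ContinuousOn γ (Set.Icc 0 1) := fun t ht => ((hdiff t ht).continuousAt).continuousWithinAt
  -- extend γ, γ' to continuous maps on ℝ
  set p : ℝ → ℝ := fun t => (Set.projIcc (0:ℝ) 1 h01 t : ℝ) with hp
  have hpc : Continuous p := continuous_subtype_val.comp continuous_projIcc
  have hpmem : ∀ t, p t ∈ Set.Icc (0:ℝ) 1 := fun t => (Set.projIcc (0:ℝ) 1 h01 t).2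
  have hpeq : ∀ t ∈ Set.Icc (0:ℝ) 1, p t = t := by
    intro t ht; rw [hp]; simp [Set.projIcc_of_mem h01 ht]
  set g : ℝ → Fin d → ℝ := γ ∘ p with hgdef
  set c : ℝ → Fin d → ℝ := γ' ∘ p with hcdef
  have hg : Continuous g := hγc.comp_continuous hpc hpmem
  have hc : Continuous c := hγ'c.comp_continuous hpc hpmem
  have hgeq : ∀ t ∈ Set.Icc (0:ℝ) 1, g t = γ t := fun t ht => by
    simp [hgdef, hpeq t ht]
  have hceq : ∀ t ∈ Set.Icc (0:ℝ) 1, c t = γ' t := fun t ht => by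
    simp [hcdef, hpeq t ht]
  -- the compact image and a compact neighborhood inside U
  set Γ : Set (Fin d → ℝ) := γ '' Set.Icc 0 1 with hΓdef
  have hΓcomp : IsCompact Γ := isCompact_Icc.image_of_continuousOn hγc
  have hΓU : Γ ⊆ U := by rintro x ⟨t, ht, rfl⟩; exact hmem t ht
  have hgΓ : ∀ t, g t ∈ Γ := fun t => ⟨p t, hpmem t, rfl⟩
  obtain ⟨δ, δpos, hδ⟩ := hΓcomp.exists_thickening_subset_open hU hΓU
  set K : Set (Fin d → ℝ) := cthickening (δ/2) Γ with hKdef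
  have hKcomp : IsCompact K := hΓcomp.cthickening
  have hKU : K ⊆ U :=
    (cthickening_subset_thickening' δpos (by linarith) Γ).trans hδ
  have hΓK : Γ ⊆ K := self_subset_cthickening Γ
  have hαK := Metric.uniformContinuousOn_iff.1
    (hKcomp.uniformContinuousOn_of_continuous (hα.mono hKU))
  -- suffices to bound the integral by every positive η
  have key : ∀ η : ℝ, 0 < η → ‖∫ t in (0:ℝ)..1, α (γ t) (γ' t)‖ ≤ η := by
    intro η ηpos
    -- bound on the speed
    obtain ⟨Cc, hCc⟩ := isCompact_Icc.exists_bound_of_continuousOn hγ'c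
    have hCc' : ∀ t, ‖c t‖ ≤ Cc := fun t => hCc (p t) (hpmem t)
    have hCc0 : 0 ≤ Cc := (norm_nonneg _).trans (hCc' 0)
    set η' : ℝ := η / (Cc + 1) with hη'
    have η'pos : 0 < η' := div_pos ηpos (by linarith)
    obtain ⟨ε₀, ε₀pos, hε₀⟩ := hαK η' η'pos
    set ε : ℝ := min (ε₀/2) (δ/2) with hε
    have εpos : 0 < ε := lt_min (by linarith) (by linarith)
    have hεδ : ε ≤ δ/2 := min_le_right _ _
    have hεε₀ : ε < ε₀ := (min_le_left _ _).trans_lt (by linarith)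
    -- the bump function
    set φ : ContDiffBump (0 : Fin d → ℝ) := ⟨ε/2, ε, by positivity, by linarith⟩ with hφ
    set φn : (Fin d → ℝ) → ℝ := φ.normed volume with hφn
    have hφsm : ContDiff ℝ (⊤:ℕ∞) φn := φ.contDiff_normed
    have hφsupp : HasCompactSupport φn := φ.hasCompactSupport_normed
    have hφsupport : Function.support φn = ball 0 ε := φ.support_normed_eq
    have hφnonneg : ∀ z, 0 ≤ φn z := fun z => φ.nonneg_normed z
    have hvanish : ∀ x y : Fin d → ℝ, ε ≤ dist x y → φn (x - y) = 0 := by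
      intro x y hxy
      by_contra h
      have : x - y ∈ Function.support φn := h
      rw [hφsupport, mem_ball_iff_norm] at this
      rw [dist_eq_norm] at hxy
      simp only [sub_zero] at this
      linarith
    -- the vector field
    set B : ℝ →L[ℝ] (Fin d → ℝ) →L[ℝ] (Fin d → ℝ) := ContinuousLinearMap.lsmul ℝ ℝ with hB
    set X : (Fin d → ℝ) → Fin d → ℝ := fun x => ∫ t in (0:ℝ)..1, B (φn (x - g t)) (c t) with hX
    have hXapp : ∀ x, X x = ∫ t in (0:ℝ)..1, φn (x - g t) • c t := fun x => rfl
    have hXsm : ContDiff ℝ (⊤:ℕ∞) X :=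
      contDiff_infty.2 fun n => stmt15_contDiff g c hg hc n B φn hφsm hφsupp
    have hXsupp : Function.support X ⊆ thickening ε Γ := by
      intro x hx
      by_contra h
      apply hx
      have hinf : ∀ t, φn (x - g t) = 0 := by
        intro t
        refine hvanish x (g t) ?_
        by_contra h2
        exact h (mem_thickening_iff.2 ⟨g t, hgΓ t, not_le.1 h2⟩)
      rw [hXapp]
      simp only [hinf, zero_smul]
      exact intervalIntegral.integral_zero
    have htsupp : tsupport X ⊆ K :=
      closure_minimal (hXsupp.trans ((thickening_subset_cthickening _ _).trans
        (cthickening_mono hεδ _))) isClosed_cthickening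
    have hXcs : HasCompactSupport X := hKcomp.of_isClosed_subset isClosed_closure htsupp
    -- divergence-free
    have hdivX : ∀ x, LinearMap.trace ℝ (Fin d → ℝ)
        ((fderiv ℝ X x : (Fin d → ℝ) →L[ℝ] (Fin d → ℝ)) :
          (Fin d → ℝ) →ₗ[ℝ] (Fin d → ℝ)) = 0 := by
      intro x
      set B' := ((ContinuousLinearMap.compL ℝ (Fin d → ℝ) ℝ (Fin d → ℝ)).comp B.flip).flip with hB'
      have hD : fderiv ℝ X x = ∫ t in (0:ℝ)..1, B' (fderiv ℝ φn (x - g t)) (c t) :=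
        (stmt15_hasFDerivAt B φn hφsm hφsupp g c hg hc x).fderiv
      set T : ((Fin d → ℝ) →L[ℝ] (Fin d → ℝ)) →L[ℝ] ℝ :=
        LinearMap.toContinuousLinearMap
          ((LinearMap.trace ℝ (Fin d → ℝ)).comp (ContinuousLinearMap.coeLM ℝ)) with hT
      have hTapp : ∀ f : (Fin d → ℝ) →L[ℝ] (Fin d → ℝ),
          T f = LinearMap.trace ℝ (Fin d → ℝ) (f : (Fin d → ℝ) →ₗ[ℝ] (Fin d → ℝ)) := fun f => by
        simp [hT]
      have hφdc : Continuous (fderiv ℝ φn) :=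
        (hφsm.fderiv_right (m := (⊤:ℕ∞)) (by exact_mod_cast le_top)).continuous
      have hcontD : Continuous fun t => B' (fderiv ℝ φn (x - g t)) (c t) :=
        B'.continuous₂.comp ((hφdc.comp (continuous_const.sub hg)).prodMk hc)
      have hInt : IntervalIntegrable (fun t => B' (fderiv ℝ φn (x - g t)) (c t)) volume 0 1 :=
        hcontD.intervalIntegrable 0 1
      rw [← hTapp, hD, ← T.intervalIntegral_comp_comm hInt]
      have heq1 : ∀ t, T (B' (fderiv ℝ φn (x - g t)) (c t)) = (fderiv ℝ φn (x - g t)) (c t) := by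
        intro t
        have hB'eq : B' (fderiv ℝ φn (x - g t)) (c t)
            = (fderiv ℝ φn (x - g t)).smulRight (c t) := by
          ext v; simp [hB', hB]
        rw [hB'eq, hTapp]; exact stmt15_trace _ _
      simp_rw [heq1]
      have hcongr : ∀ t ∈ Set.uIcc (0:ℝ) 1,
          (fun s => (fderiv ℝ φn (x - g s)) (c s)) t
            = (fun s => (fderiv ℝ φn (x - γ s)) (γ' s)) t := by
        intro t ht; rw [hIcc] at ht
        simp only
        rw [hgeq t ht, hceq t ht]
      rw [intervalIntegral.integral_congr hcongr]
      have hder : ∀ t ∈ Set.uIcc (0:ℝ) 1,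
          HasDerivAt (fun s => -φn (x - γ s)) ((fderiv ℝ φn (x - γ t)) (γ' t)) t := by
        intro t ht
        rw [hIcc] at ht
        have h1 : HasDerivAt (fun s => x - γ s) (-γ' t) t := (hdiff t ht).const_sub x
        have h2 : HasFDerivAt φn (fderiv ℝ φn (x - γ t)) (x - γ t) :=
          (hφsm.differentiable (by simp) _).hasFDerivAt
        have h3 := (h2.comp_hasDerivAt t h1).neg
        rw [show (fderiv ℝ φn (x - γ t)) (γ' t) = -(fderiv ℝ φn (x - γ t)) (-γ' t) by simp]
        exact h3
      have hiint : IntervalIntegrable (fun s => (fderiv ℝ φn (x - γ s)) (γ' s)) volume 0 1 := by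
        apply ContinuousOn.intervalIntegrable
        rw [hIcc]
        exact ((hφdc.comp_continuousOn (continuousOn_const.sub hγc)).clm_apply hγ'c)
      rw [intervalIntegral.integral_eq_sub_of_hasDerivAt hder hiint]
      rw [hclosed]
      exact sub_self _
    -- the hypothesis
    have h0 := hint X hXsm hXcs (htsupp.trans hKU) hdivX
    -- pass to the thickening V
    set V : Set (Fin d → ℝ) := thickening ε Γ with hVdef
    have hVopen : IsOpen V := isOpen_thickening
    have hVK : V ⊆ K := thickening_subset_cthickening_of_le hεδ Γ
    have hVU : V ⊆ U := hVK.trans hKU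
    have hVfin : volume V < ⊤ := (hKcomp.isBounded.subset hVK).measure_lt_top
    haveI : Fact (volume V < ⊤) := ⟨hVfin⟩
    haveI : Fact (volume (Set.Ioc (0:ℝ) 1) < ⊤) := ⟨measure_Ioc_lt_top⟩
    have hXzero : ∀ x ∉ V, X x = 0 := fun x hx =>
      Function.notMem_support.1 fun h => hx (hXsupp h)
    have hFzero : ∀ x ∉ V, α x (X x) = 0 := fun x hx => by rw [hXzero x hx]; simp
    have hA : ∫ x in V, α x (X x) = 0 := by
      have e1 : ∫ x in U, α x (X x) = ∫ x, α x (X x) :=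
        setIntegral_eq_integral_of_forall_compl_eq_zero
          (fun x hx => hFzero x fun hv => hx (hVU hv))
      have e2 : ∫ x in V, α x (X x) = ∫ x, α x (X x) :=
        setIntegral_eq_integral_of_forall_compl_eq_zero hFzero
      rw [e2, ← e1, h0]
    -- pointwise expansion of α x (X x)
    have hintg : ∀ x : Fin d → ℝ,
        IntervalIntegrable (fun t => φn (x - g t) • c t) volume 0 1 := fun x =>
      ((hφsm.continuous.comp (continuous_const.sub hg)).smul hc).intervalIntegrable 0 1
    have hBpt : ∀ x : Fin d → ℝ,
        α x (X x) = ∫ t in Set.Ioc (0:ℝ) 1, φn (x - g t) * α x (c t) := by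
      intro x
      rw [hXapp x, ← ContinuousLinearMap.intervalIntegral_comp_comm (α x) (hintg x),
        ← intervalIntegral.integral_of_le h01]
      simp_rw [_root_.map_smul, smul_eq_mul]
    -- Fubini
    obtain ⟨Cφ, hCφ⟩ := hφsupp.exists_bound_of_continuous hφsm.continuous
    have hCφ0 : 0 ≤ Cφ := (norm_nonneg _).trans (hCφ 0)
    obtain ⟨Cα, hCα⟩ := hKcomp.exists_bound_of_continuousOn (hα.mono hKU)
    have hγ0K : γ 0 ∈ K := hΓK ⟨0, Set.left_mem_Icc.2 h01, rfl⟩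
    have hCα0 : 0 ≤ Cα := (norm_nonneg _).trans (hCα (γ 0) hγ0K)
    set W : (Fin d → ℝ) × ℝ → ℝ := fun q => φn (q.1 - g q.2) * α q.1 (c q.2) with hWdef
    have hWcont : ContinuousOn W (V ×ˢ Set.Ioc (0:ℝ) 1) := by
      have c1 : Continuous fun q : (Fin d → ℝ) × ℝ => φn (q.1 - g q.2) :=
        hφsm.continuous.comp (continuous_fst.sub (hg.comp continuous_snd))
      have c2 : ContinuousOn (fun q : (Fin d → ℝ) × ℝ => α q.1 (c q.2))
          (V ×ˢ Set.Ioc (0:ℝ) 1) :=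
        (((hα.mono hVU).comp continuousOn_fst fun q hq => hq.1).clm_apply
          (hc.comp continuous_snd).continuousOn)
      exact c1.continuousOn.mul c2
    have hWint : Integrable W ((volume.restrict V).prod (volume.restrict (Set.Ioc (0:ℝ) 1))) := by
      refine Integrable.mono' (integrable_const (Cφ * (Cα * Cc))) ?_ ?_
      · rw [Measure.prod_restrict]
        exact hWcont.aestronglyMeasurable (hVopen.measurableSet.prod measurableSet_Ioc)
      · rw [Measure.prod_restrict]
        filter_upwards [ae_restrict_mem (hVopen.measurableSet.prod measurableSet_Ioc)] with q hq
        have hq1 : q.1 ∈ K := hVK hq.1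
        calc ‖W q‖ = ‖φn (q.1 - g q.2)‖ * ‖α q.1 (c q.2)‖ := norm_mul _ _
          _ ≤ Cφ * (Cα * Cc) := by
              refine mul_le_mul (hCφ _) ?_ (norm_nonneg _) hCφ0
              calc ‖α q.1 (c q.2)‖ ≤ ‖α q.1‖ * ‖c q.2‖ := ContinuousLinearMap.le_opNorm _ _
                _ ≤ Cα * Cc := mul_le_mul (hCα _ hq1) (hCc' _) (norm_nonneg _) hCα0
    have hswap : ∫ x in V, ∫ t in Set.Ioc (0:ℝ) 1, W (x, t)
        = ∫ t in Set.Ioc (0:ℝ) 1, ∫ x in V, W (x, t) := integral_integral_swap hWint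
    set J : ℝ → ℝ := fun t => ∫ x in V, φn (x - g t) * α x (c t) with hJdef
    have hJ0 : ∫ t in Set.Ioc (0:ℝ) 1, J t = 0 := by
      have e3 : ∫ x in V, α x (X x) = ∫ x in V, ∫ t in Set.Ioc (0:ℝ) 1, W (x, t) :=
        setIntegral_congr_fun hVopen.measurableSet fun x _ => hBpt x
      have e4 : ∫ t in Set.Ioc (0:ℝ) 1, J t
          = ∫ t in Set.Ioc (0:ℝ) 1, ∫ x in V, W (x, t) := rfl
      rw [e4, ← hswap, ← e3, hA]
    -- the inner estimate
    have hE : ∀ t : ℝ, ‖J t - α (g t) (c t)‖ ≤ η' * Cc := by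
      intro t
      have hgtΓ : g t ∈ Γ := hgΓ t
      have hgtK : g t ∈ K := hΓK hgtΓ
      have hball : ball (g t) ε ⊆ V := fun x hx => mem_thickening_iff.2 ⟨g t, hgtΓ, mem_ball.1 hx⟩
      have hφint : Integrable (fun x => φn (x - g t)) volume :=
        φ.integrable_normed.comp_sub_right (g t)
      have hone : ∫ x in V, φn (x - g t) = 1 := by
        have e1 : ∫ x in V, φn (x - g t) = ∫ x, φn (x - g t) := by
          refine setIntegral_eq_integral_of_forall_compl_eq_zero fun x hx => ?_
          refine hvanish x (g t) ?_
          by_contra h2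
          exact hx (hball (mem_ball.2 (not_le.1 h2)))
        rw [e1, integral_sub_right_eq_self φn (g t)]
        exact φ.integral_normed
      have hint1 : IntegrableOn (fun x => φn (x - g t) * α x (c t)) V volume := by
        refine Integrable.mono' (integrable_const (Cφ * (Cα * Cc))) ?_ ?_
        · refine ContinuousOn.aestronglyMeasurable ?_ hVopen.measurableSet
          exact ((hφsm.continuous.comp (continuous_id.sub continuous_const)).continuousOn).mul
            ((hα.mono hVU).clm_apply continuousOn_const)
        · filter_upwards [ae_restrict_mem hVopen.measurableSet] with x hx
          calc ‖φn (x - g t) * α x (c t)‖ = ‖φn (x - g t)‖ * ‖α x (c t)‖ := norm_mul _ _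
            _ ≤ Cφ * (Cα * Cc) := by
                refine mul_le_mul (hCφ _) ?_ (norm_nonneg _) hCφ0
                calc ‖α x (c t)‖ ≤ ‖α x‖ * ‖c t‖ := ContinuousLinearMap.le_opNorm _ _
                  _ ≤ Cα * Cc := mul_le_mul (hCα _ (hVK hx)) (hCc' _) (norm_nonneg _) hCα0
      have hint2 : IntegrableOn (fun x => φn (x - g t) * α (g t) (c t)) V volume :=
        (hφint.integrableOn).mul_const _
      have hsub : J t - α (g t) (c t)
          = ∫ x in V, φn (x - g t) * (α x (c t) - α (g t) (c t)) := by
        have : (fun x => φn (x - g t) * (α x (c t) - α (g t) (c t)))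
            = fun x => φn (x - g t) * α x (c t) - φn (x - g t) * α (g t) (c t) := by
          funext x; ring
        rw [this, integral_sub hint1 hint2, MeasureTheory.integral_mul_const, hone, one_mul, hJdef]
      have hptbd : ∀ x ∈ V, ‖φn (x - g t) * (α x (c t) - α (g t) (c t))‖
          ≤ φn (x - g t) * (η' * Cc) := by
        intro x hx
        rcases lt_or_ge (dist x (g t)) ε with hlt | hge
        · have hd : dist (α x) (α (g t)) < η' := hε₀ x (hVK hx) (g t) hgtK (hlt.trans hεε₀)
          rw [dist_eq_norm] at hd
          rw [norm_mul, Real.norm_of_nonneg (hφnonneg _)]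
          refine mul_le_mul_of_nonneg_left ?_ (hφnonneg _)
          calc ‖α x (c t) - α (g t) (c t)‖ = ‖(α x - α (g t)) (c t)‖ := by simp
            _ ≤ ‖α x - α (g t)‖ * ‖c t‖ := ContinuousLinearMap.le_opNorm _ _
            _ ≤ η' * Cc := mul_le_mul hd.le (hCc' _) (norm_nonneg _) η'pos.le
        · rw [hvanish x (g t) hge]
          simp
      have hbd_int : Integrable (fun x => φn (x - g t) * (η' * Cc)) (volume.restrict V) :=
        (hφint.integrableOn).mul_const _
      calc ‖J t - α (g t) (c t)‖
          = ‖∫ x in V, φn (x - g t) * (α x (c t) - α (g t) (c t))‖ := by rw [hsub]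
        _ ≤ ∫ x in V, φn (x - g t) * (η' * Cc) := by
            refine norm_integral_le_of_norm_le hbd_int ?_
            filter_upwards [ae_restrict_mem hVopen.measurableSet] with x hx
            exact hptbd x hx
        _ = (∫ x in V, φn (x - g t)) * (η' * Cc) := MeasureTheory.integral_mul_const _ _
        _ = η' * Cc := by rw [hone, one_mul]
    -- final estimate
    have hJint : Integrable J (volume.restrict (Set.Ioc (0:ℝ) 1)) := hWint.integral_prod_right
    have htarg_cont : Continuous fun t => α (g t) (c t) := by
      have hαg : Continuous fun t => α (g t) :=
        continuous_iff_continuousAt.2 fun t =>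
          (hα.continuousAt (hU.mem_nhds (hΓU (hgΓ t)))).comp hg.continuousAt
      exact hαg.clm_apply hc
    have htarg_int : Integrable (fun t => α (g t) (c t)) (volume.restrict (Set.Ioc (0:ℝ) 1)) :=
      (htarg_cont.integrableOn_Icc (μ := volume) (a := 0) (b := 1)).mono_set
        Set.Ioc_subset_Icc_self
    have hIeq : ∫ t in (0:ℝ)..1, α (γ t) (γ' t) = ∫ t in Set.Ioc (0:ℝ) 1, α (g t) (c t) := by
      rw [← intervalIntegral.integral_of_le h01]
      refine intervalIntegral.integral_congr fun t ht => ?_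
      rw [hIcc] at ht
      rw [hgeq t ht, hceq t ht]
    rw [hIeq]
    have : ∫ t in Set.Ioc (0:ℝ) 1, α (g t) (c t)
        = ∫ t in Set.Ioc (0:ℝ) 1, (α (g t) (c t) - J t) := by
      rw [integral_sub htarg_int hJint, hJ0, sub_zero]
    rw [this]
    calc ‖∫ t in Set.Ioc (0:ℝ) 1, (α (g t) (c t) - J t)‖
        ≤ ∫ _t in Set.Ioc (0:ℝ) 1, η' * Cc := by
          refine norm_integral_le_of_norm_le (integrable_const _) ?_
          filter_upwards with t
          rw [norm_sub_rev]
          exact hE t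
      _ = (volume (Set.Ioc (0:ℝ) 1)).toReal * (η' * Cc) := by
          rw [MeasureTheory.integral_const, measureReal_restrict_apply_univ, smul_eq_mul, measureReal_def]
      _ ≤ η' * (Cc + 1) := by
          rw [Real.volume_Ioc]
          simp only [sub_zero, ENNReal.toReal_ofReal zero_le_one, one_mul]
          have : 0 ≤ η' := η'pos.le
          nlinarith
      _ = η := by
          rw [hη']
          field_simp
  -- conclude
  have : ‖∫ t in (0:ℝ)..1, α (γ t) (γ' t)‖ ≤ 0 := by
    by_contra h
    obtain ⟨η, hη1, hη2⟩ := exists_between (not_le.1 h)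
    exact absurd (key η hη1) (not_le.2 hη2)
  simpa using this
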